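/- Let A ∈ B^{n×n}, λ ∈ B, K, L a partition of N = {1,...,n}, and fix x_L ∈ B^L. The equation A_{KK} ⊗ x_K ⊕ A_{KL} ⊗ x_L = x_K has a solution x_K with x_K ≤ λ·1_K if and only if (A_{KK})^* ⊗ A_{KL} ⊗ x_L ≤ λ·1_K. In that case the set of such solutions equals { (A_{KK})^* ⊗ A_{KL} ⊗ x_L ⊕ v : v ∈ B^K, A_{KK} ⊗ v = v, v ≤ λ·1_K }, which also equals { (A_{KK})^* ⊗ A_{KL} ⊗ x_L ⊕ (A_{KK})^*_λ ⊗ z : z ∈ B^{|K|} }. -/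

import Mathlib

noncomputable section

/-- The max-min algebra: the unit interval `[0,1] ⊆ ℝ` with `⊕ = max = ⊔` and `⊗ = min = ⊓`. -/
abbrev B : Type := unitInterval

instance : Fact ((0:ℝ) ≤ 1) := ⟨zero_le_one⟩

/-- Max-min matrix-vector product: `(A ⊗ x)_i = max_j min (A i j) (x j)`. -/
def mmVec {α β : Type*} (A : Matrix α β B) (x : β → B) : α → B :=
  fun i => ⨆ j, A i j ⊓ x j

/-- Max-min matrix-matrix product. -/
def mmMul {α β γ : Type*} (A : Matrix α β B) (C : Matrix β γ B) : Matrix α γ B :=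
  fun i k => ⨆ j, A i j ⊓ C j k

/-- The max-min identity matrix. -/
def mmId (α : Type*) [DecidableEq α] : Matrix α α B :=
  fun i j => if i = j then 1 else 0

/-- Max-min matrix powers, `A^0 = I`. -/
def mmPow {α : Type*} [DecidableEq α] (A : Matrix α α B) : ℕ → Matrix α α B
  | 0 => mmId α
  | k + 1 => mmMul A (mmPow A k)

/-- The metric matrix `A⁺ = A ⊕ A² ⊕ ... ⊕ Aⁿ`. -/
def mmPlus {α : Type*} [Fintype α] [DecidableEq α] (A : Matrix α α B) : Matrix α α B :=
  fun i j => ⨆ k ∈ Finset.Icc 1 (Fintype.card α), mmPow A k i j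

/-- The Kleene star `A* = I ⊕ A ⊕ ... ⊕ A^{n-1}`. -/
def mmStar {α : Type*} [Fintype α] [DecidableEq α] (A : Matrix α α B) : Matrix α α B :=
  fun i j => ⨆ k ∈ Finset.range (Fintype.card α), mmPow A k i j

/-- The matrix `A*_λ`, whose `i`-th column has entries `min (λ, (A⁺)_{ii}, (A*)_{ki})`. -/
def mmStarLam {α : Type*} [Fintype α] [DecidableEq α] (A : Matrix α α B) (lam : B) :
    Matrix α α B :=
  fun k i => lam ⊓ mmPlus A i i ⊓ mmStar A k i

/-- Submatrix of `A` with rows in `P` and columns in `Q`. -/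
def subM {n : ℕ} (A : Matrix (Fin n) (Fin n) B) (P Q : Finset (Fin n)) :
    Matrix ↥P ↥Q B :=
  fun i j => A i j

/-- Subvector of `x` indexed by `P`. -/
def subV {n : ℕ} (x : Fin n → B) (P : Finset (Fin n)) : ↥P → B :=
  fun i => x i

/-- `x` is a `(K,L)` `λ`-eigenvector of `A`: `A ⊗ x = λ ⊗ x`, `x_i ≤ λ` for `i ∈ K`,
`x_i ≥ λ` for `i ∈ L`. -/
def IsKLEig {n : ℕ} (A : Matrix (Fin n) (Fin n) B) (lam : B) (K L : Finset (Fin n))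
    (x : Fin n → B) : Prop :=
  mmVec A x = (fun i => lam ⊓ x i) ∧ (∀ i ∈ K, x i ≤ lam) ∧ (∀ i ∈ L, lam ≤ x i)


-- basic B lemmas
lemma B_bot : (⊥ : B) = 0 := rfl
lemma B_le_one (x : B) : x ≤ 1 := x.2.2
lemma B_zero_le (x : B) : (0:B) ≤ x := x.2.1
lemma B_one_inf (x : B) : (1:B) ⊓ x = x := inf_eq_right.mpr (B_le_one x)
lemma B_zero_inf (x : B) : (0:B) ⊓ x = 0 := inf_eq_left.mpr (B_zero_le x)

section basic
variable {α β γ : Type*}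

lemma mmVec_mono {M : Matrix α β B} {x y : β → B} (h : ∀ j, x j ≤ y j) (i : α) :
    mmVec M x i ≤ mmVec M y i :=
  iSup_mono fun j => inf_le_inf_left _ (h j)

lemma mmVec_mono_mat {M P : Matrix α β B} (h : ∀ i j, M i j ≤ P i j) (x : β → B) (i : α) :
    mmVec M x i ≤ mmVec P x i :=
  iSup_mono fun j => inf_le_inf_right _ (h i j)

lemma mmVec_mmMul (P : Matrix α β B) (Q : Matrix β γ B) (x : γ → B) :
    mmVec (mmMul P Q) x = mmVec P (mmVec Q x) := by
  funext i
  simp only [mmVec, mmMul, iSup_inf_eq, inf_iSup_eq, inf_assoc]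
  exact iSup_comm

lemma mmVec_mmId [DecidableEq α] (x : α → B) : mmVec (mmId α) x = x := by
  funext i
  apply le_antisymm
  · refine iSup_le fun j => ?_
    by_cases h : i = j
    · subst h; simp [mmId, B_one_inf]
    · simp only [mmId, if_neg h, B_zero_inf]; exact B_zero_le _
  · refine le_iSup_of_le i ?_
    rw [mmId, if_pos rfl, B_one_inf]

lemma mmMul_assoc (P : Matrix α β B) (Q : Matrix β γ B) {δ : Type*} (R : Matrix γ δ B) :
    mmMul (mmMul P Q) R = mmMul P (mmMul Q R) := by
  funext i l
  simp only [mmMul, iSup_inf_eq, inf_iSup_eq, inf_assoc]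
  exact iSup_comm

lemma mmMul_mmId [DecidableEq β] (P : Matrix α β B) : mmMul P (mmId β) = P := by
  funext i j
  apply le_antisymm
  · refine iSup_le fun l => ?_
    by_cases h : l = j
    · subst h; rw [mmId, if_pos rfl]
      exact inf_le_left
    · simp only [mmId, if_neg h]
      exact le_trans inf_le_right (B_zero_le _)
  · refine le_iSup_of_le j ?_
    rw [mmId, if_pos rfl]
    exact le_inf le_rfl (B_le_one _)

lemma mmId_mmMul [DecidableEq α] (P : Matrix α β B) : mmMul (mmId α) P = P := by
  funext i j
  apply le_antisymm
  · refine iSup_le fun l => ?_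
    by_cases h : i = l
    · subst h; rw [mmId, if_pos rfl, B_one_inf]
    · simp only [mmId, if_neg h, B_zero_inf]; exact B_zero_le _
  · refine le_iSup_of_le i ?_
    rw [mmId, if_pos rfl, B_one_inf]

lemma mmPow_succ_right [DecidableEq α] (M : Matrix α α B) (k : ℕ) :
    mmPow M (k+1) = mmMul (mmPow M k) M := by
  induction k with
  | zero => show mmMul M (mmId α) = mmMul (mmId α) M; rw [mmMul_mmId, mmId_mmMul]
  | succ k ih =>
    calc mmMul M (mmPow M (k+1)) = mmMul M (mmMul (mmPow M k) M) := by rw [ih]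
      _ = mmMul (mmMul M (mmPow M k)) M := (mmMul_assoc _ _ _).symm
      _ = mmMul (mmPow M (k+1)) M := rfl

end basic

set_option linter.unusedSectionVars false

section paths
variable {α : Type*} [Fintype α] [DecidableEq α]

/-- weight of a path of length `k` -/
def pw (M : Matrix α α B) (k : ℕ) (p : ℕ → α) : B :=
  (Finset.range k).inf fun t => M (p t) (p (t+1))

lemma pw_congr {M : Matrix α α B} {k : ℕ} {p q : ℕ → α} (h : ∀ t ≤ k, p t = q t) :
    pw M k p = pw M k q := by
  unfold pw
  refine Finset.inf_congr rfl fun t ht => ?_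
  rw [Finset.mem_range] at ht
  rw [h t (by omega), h (t+1) (by omega)]

lemma pw_le {M : Matrix α α B} {s k : ℕ} (h : s ≤ k) (p : ℕ → α) : pw M k p ≤ pw M s p :=
  Finset.inf_mono (Finset.range_subset_range.mpr h)

lemma pw_shift (M : Matrix α α B) (s k : ℕ) (p : ℕ → α) :
    pw M (s + k) p ≤ pw M k (fun u => p (s + u)) := by
  refine Finset.le_inf fun t ht => ?_
  rw [Finset.mem_range] at ht
  exact Finset.inf_le (Finset.mem_range.mpr (by omega : s + t < s + k))

lemma mmPow_eq (M : Matrix α α B) (k : ℕ) (i j : α) :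
    mmPow M k i j = ⨆ p : ℕ → α, ⨆ _ : p 0 = i ∧ p k = j, pw M k p := by
  induction k generalizing j with
  | zero =>
    by_cases h : i = j
    · subst h
      apply le_antisymm
      · refine le_iSup_of_le (fun _ => i) (le_iSup_of_le ⟨rfl, rfl⟩ ?_)
        show mmId α i i ≤ pw M 0 _
        rw [pw, Finset.range_zero, Finset.inf_empty]
        exact le_top
      · exact le_trans le_top (by rw [show mmPow M 0 i i = mmId α i i from rfl, mmId, if_pos rfl]; exact (B_one_inf ⊤) ▸ le_inf (B_le_one _) le_rfl |>.trans le_rfl)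
    · apply le_antisymm
      · show mmId α i j ≤ _
        rw [mmId, if_neg h]
        exact B_zero_le _
      · exact iSup_le fun p => iSup_le fun hp => (h (hp.1.symm.trans hp.2)).elim
  | succ k ih =>
    rw [mmPow_succ_right]
    show (⨆ l, mmPow M k i l ⊓ M l j) = _
    apply le_antisymm
    · refine iSup_le fun l => ?_
      rw [ih l]
      simp only [iSup_inf_eq]
      refine iSup_le fun p => iSup_le fun hp => ?_
      set q : ℕ → α := fun t => if t = k+1 then j else p t with hq
      have hqk : pw M (k+1) q = M l j ⊓ pw M k p := by
        rw [pw, Finset.range_add_one, Finset.inf_insert]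
        have h1 : q k = l := by rw [hq]; simp only [Nat.succ_ne_self, if_neg (by omega : ¬ k = k+1)]; exact hp.2
        have h2 : q (k+1) = j := by rw [hq]; simp
        have h3 : (Finset.range k).inf (fun t => M (q t) (q (t+1))) = pw M k p := by
          refine (pw_congr fun t ht => ?_).symm
          rw [hq]; simp only [if_neg (by omega : ¬ t = k+1)]
        rw [h1, h2, h3]
      refine le_iSup_of_le q (le_iSup_of_le ⟨?_, ?_⟩ ?_)
      · rw [hq]; simp only [if_neg (by omega : ¬ (0:ℕ) = k+1)]; exact hp.1
      · rw [hq]; simp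
      · rw [hqk, inf_comm]
    · refine iSup_le fun q => iSup_le fun hq => ?_
      have hsplit : pw M (k+1) q = M (q k) (q (k+1)) ⊓ pw M k q := by
        rw [pw, Finset.range_add_one, Finset.inf_insert]; rfl
      refine le_iSup_of_le (q k) ?_
      rw [hsplit, hq.2, inf_comm]
      refine inf_le_inf_right _ ?_
      rw [ih (q k)]
      exact le_iSup_of_le q (le_iSup_of_le ⟨hq.1, rfl⟩ le_rfl)

end paths

section pigeon
variable {α : Type*} [Fintype α] [DecidableEq α]

lemma mmPow_le_mmStar (M : Matrix α α B) (k : ℕ) (i j : α) :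
    mmPow M k i j ≤ mmStar M i j := by
  have hne : Nonempty α := ⟨i⟩
  have hm : 0 < Fintype.card α := Fintype.card_pos
  induction k using Nat.strong_induction_on with
  | _ k IH =>
  by_cases hk : k < Fintype.card α
  · exact le_iSup_of_le k (le_iSup_of_le (Finset.mem_range.mpr hk) le_rfl)
  · push_neg at hk
    rw [mmPow_eq]
    refine iSup_le fun p => iSup_le fun hp => ?_
    obtain ⟨u, v, huv, hpe⟩ := Fintype.exists_ne_map_eq_of_card_lt
      (fun u : Fin (Fintype.card α + 1) => p u) (by simp)
    obtain ⟨s, t, hst, htm, hpst⟩ : ∃ s t : ℕ, s < t ∧ t ≤ Fintype.card α ∧ p s = p t := by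
      rcases lt_or_gt_of_ne (fun h => huv (Fin.ext h) : (u:ℕ) ≠ (v:ℕ)) with h | h
      · exact ⟨u, v, h, by omega, hpe⟩
      · exact ⟨v, u, h, by omega, hpe.symm⟩
    set d := t - s with hd
    set k' := k - d with hk'
    set q : ℕ → α := fun e => if e < s then p e else p (e + d) with hq
    have hcut : pw M k p ≤ pw M k' q := by
      refine Finset.le_inf fun e he => ?_
      rw [Finset.mem_range] at he
      by_cases hes : e < s
      · have hqe : q e = p e := if_pos hes
        have hqe1 : q (e+1) = p (e+1) := by
          by_cases h1 : e+1 < s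
          · exact if_pos h1
          · have h2 : e + 1 = s := by omega
            rw [hq]; simp only [if_neg h1]
            rw [h2, show s + d = t by omega, ← hpst, ← h2]
        rw [hqe, hqe1]
        exact Finset.inf_le (Finset.mem_range.mpr (by omega : e < k))
      · have hqe : q e = p (e + d) := if_neg hes
        have hqe1 : q (e+1) = p (e + d + 1) := by
          rw [hq]; simp only [if_neg (by omega : ¬ e + 1 < s)]
          congr 1; omega
        rw [hqe, hqe1]
        exact Finset.inf_le (Finset.mem_range.mpr (by omega : e + d < k))
    have hq0 : q 0 = i := by
      by_cases h0 : 0 < s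
      · rw [hq]; simp only [if_pos h0]; exact hp.1
      · have hs0 : s = 0 := by omega
        rw [hq]; simp only [if_neg (by omega : ¬ (0:ℕ) < s)]
        rw [show 0 + d = t by omega, ← hpst, hs0]; exact hp.1
    have hqk : q k' = j := by
      rw [hq]; simp only [if_neg (by omega : ¬ k' < s)]
      rw [show k' + d = k by omega]; exact hp.2
    calc pw M k p ≤ pw M k' q := hcut
      _ ≤ mmPow M k' i j := by
          rw [mmPow_eq]
          exact le_iSup_of_le q (le_iSup_of_le ⟨hq0, hqk⟩ le_rfl)
      _ ≤ mmStar M i j := IH k' (by omega)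

end pigeon

section vec
variable {α : Type*} [Fintype α] [DecidableEq α] (M : Matrix α α B)

lemma mmVec_mmStar_eq (b : α → B) (i : α) :
    mmVec (mmStar M) b i = ⨆ k ∈ Finset.range (Fintype.card α), mmVec (mmPow M k) b i := by
  simp only [mmVec, mmStar, iSup_inf_eq]
  rw [iSup_comm]
  exact iSup_congr fun k => iSup_comm

lemma mmVec_mmPow_succ (b : α → B) (k : ℕ) :
    mmVec (mmPow M (k+1)) b = mmVec M (mmVec (mmPow M k) b) := by
  rw [show mmPow M (k+1) = mmMul M (mmPow M k) from rfl, mmVec_mmMul]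

lemma mmVec_mmPow_zero (b : α → B) : mmVec (mmPow M 0) b = b := mmVec_mmId b

variable {M}

lemma sol_ge_pow {x b : α → B} (hsol : ∀ i, mmVec M x i ⊔ b i = x i) (k : ℕ) (i : α) :
    mmVec (mmPow M k) b i ≤ x i := by
  induction k generalizing i with
  | zero => rw [mmVec_mmPow_zero]; exact le_sup_right.trans (hsol i).le
  | succ k ih =>
    rw [mmVec_mmPow_succ]
    exact (mmVec_mono ih i).trans (le_sup_left.trans (hsol i).le)

lemma xstar_le_sol {x b : α → B} (hsol : ∀ i, mmVec M x i ⊔ b i = x i) (i : α) :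
    mmVec (mmStar M) b i ≤ x i := by
  rw [mmVec_mmStar_eq]
  exact iSup_le fun k => iSup_le fun _ => sol_ge_pow hsol k i

lemma b_le_xstar (b : α → B) (i : α) : b i ≤ mmVec (mmStar M) b i := by
  have : Nonempty α := ⟨i⟩
  rw [mmVec_mmStar_eq]
  refine le_iSup_of_le 0 (le_iSup_of_le (Finset.mem_range.mpr Fintype.card_pos) ?_)
  rw [mmVec_mmPow_zero]

lemma mmMul_mmStar_le (P : Matrix α α B) (i j : α) : mmMul P (mmStar P) i j ≤ mmStar P i j := by
  refine iSup_le fun l => ?_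
  simp only [mmStar, inf_iSup_eq]
  refine iSup_le fun k => iSup_le fun hk => ?_
  exact le_trans (le_iSup (fun l => P i l ⊓ mmPow P k l j) l) (mmPow_le_mmStar P (k+1) i j)

lemma Mxstar_le_xstar (b : α → B) (i : α) :
    mmVec M (mmVec (mmStar M) b) i ≤ mmVec (mmStar M) b i := by
  rw [← mmVec_mmMul]
  exact mmVec_mono_mat (mmMul_mmStar_le M) b i

lemma xstar_sol (b : α → B) (i : α) :
    mmVec M (mmVec (mmStar M) b) i ⊔ b i = mmVec (mmStar M) b i := by
  refine le_antisymm (sup_le (Mxstar_le_xstar b i) (b_le_xstar b i)) ?_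
  rw [mmVec_mmStar_eq]
  refine iSup_le fun k => iSup_le fun hk => ?_
  match k with
  | 0 => rw [mmVec_mmPow_zero]; exact le_sup_right
  | k+1 =>
    rw [mmVec_mmPow_succ]
    refine le_trans (mmVec_mono (fun j => ?_) i) le_sup_left
    rw [mmVec_mmStar_eq]
    exact le_iSup_of_le k (le_iSup_of_le (Finset.mem_range.mpr (by
      rw [Finset.mem_range] at hk; omega)) le_rfl)

lemma mmVec_pow_fix {v : α → B} (hv : mmVec M v = v) (k : ℕ) : mmVec (mmPow M k) v = v := by
  induction k with
  | zero => exact mmVec_mmPow_zero M v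
  | succ k ih => rw [mmVec_mmPow_succ, ih, hv]

lemma mmVec_star_fix {v : α → B} (hv : mmVec M v = v) : mmVec (mmStar M) v = v := by
  funext i
  have : Nonempty α := ⟨i⟩
  rw [mmVec_mmStar_eq]
  refine le_antisymm (iSup_le fun k => iSup_le fun _ => le_of_eq (congrFun (mmVec_pow_fix hv k) i)) ?_
  refine le_iSup_of_le 0 (le_iSup_of_le (Finset.mem_range.mpr Fintype.card_pos) ?_)
  rw [mmVec_mmPow_zero]

lemma mmVec_sup_le (x y : α → B) (i : α) :
    mmVec M (fun j => x j ⊔ y j) i ≤ mmVec M x i ⊔ mmVec M y i := by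
  refine iSup_le fun j => ?_
  rw [inf_sup_left]
  exact sup_le_sup (le_iSup (fun j => M i j ⊓ x j) j) (le_iSup (fun j => M i j ⊓ y j) j)

lemma exists_fix {x : α → B} (hx : ∀ i, mmVec M x i ≤ x i) :
    ∃ v : α → B, mmVec M v = v ∧ (∀ i, v i ≤ x i) ∧ ∃ a : ℕ, v = mmVec (mmPow M a) x := by
  set y : ℕ → α → B := fun k => mmVec (mmPow M k) x with hy
  have hy0 : y 0 = x := mmVec_mmPow_zero M x
  have hysucc : ∀ k, y (k+1) = mmVec M (y k) := fun k => mmVec_mmPow_succ M x k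
  set E : Finset B := (Finset.univ ×ˢ Finset.univ).image (fun p : α × α => M p.1 p.2) ∪
    Finset.univ.image x with hE
  have hmem : ∀ k i, y k i ∈ E := by
    intro k
    induction k with
    | zero => intro i; rw [hy0]; exact Finset.mem_union_right _ (Finset.mem_image_of_mem x (Finset.mem_univ i))
    | succ k ih =>
      intro i
      have hne : Nonempty α := ⟨i⟩
      obtain ⟨j0, hj0⟩ := Finite.exists_max (fun j => M i j ⊓ y k j)
      have : y (k+1) i = M i j0 ⊓ y k j0 := by
        rw [hysucc k]
        exact le_antisymm (iSup_le hj0) (le_iSup (fun j => M i j ⊓ y k j) j0)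
      rw [this]
      rcases le_total (M i j0) (y k j0) with h | h
      · rw [inf_eq_left.mpr h]
        exact Finset.mem_union_left _ (Finset.mem_image.mpr ⟨(i, j0), by simp, rfl⟩)
      · rw [inf_eq_right.mpr h]
        exact ih j0
  have hanti : ∀ k i, y (k+1) i ≤ y k i := by
    intro k
    induction k with
    | zero => intro i; rw [hysucc, hy0]; exact hx i
    | succ k ih =>
      intro i
      calc y (k+2) i = mmVec M (y (k+1)) i := congrFun (hysucc (k+1)) i
        _ ≤ mmVec M (y k) i := mmVec_mono ih i
        _ = y (k+1) i := (congrFun (hysucc k) i).symm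
  have hanti' : ∀ a c, a ≤ c → ∀ i, y c i ≤ y a i := by
    intro a c h
    induction c, h using Nat.le_induction with
    | base => exact fun i => le_rfl
    | succ c hc ih => exact fun i => (hanti c i).trans (ih i)
  have : Finite (α → {e // e ∈ E}) := by infer_instance
  obtain ⟨a, c, hne, heq⟩ := Finite.exists_ne_map_eq_of_infinite
    (fun k (i : α) => (⟨y k i, hmem k i⟩ : {e // e ∈ E}))
  wlog hac : a < c generalizing a c
  · exact this c a hne.symm heq.symm (by omega)
  have heq' : ∀ i, y a i = y c i := fun i => congrArg Subtype.val (congrFun heq i)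
  have hfix : ∀ i, y (a+1) i = y a i := fun i =>
    le_antisymm (hanti a i) ((heq' i).le.trans (hanti' (a+1) c (by omega) i))
  refine ⟨y a, ?_, fun i => hy0 ▸ hanti' 0 a (Nat.zero_le a) i, a, rfl⟩
  rw [← hysucc a]
  exact funext hfix

end vec

section starlam
variable {α : Type*} [Fintype α] [DecidableEq α] (M : Matrix α α B) (lam : B)

lemma mmVec_starLam_le_lam (z : α → B) (i : α) : mmVec (mmStarLam M lam) z i ≤ lam :=
  iSup_le fun _ => le_trans inf_le_left (le_trans inf_le_left inf_le_left)

lemma mmMul_mmStar_eq_mmPlus (k i : α) : mmMul M (mmStar M) k i = mmPlus M k i := by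
  apply le_antisymm
  · refine iSup_le fun l => ?_
    simp only [mmStar, inf_iSup_eq]
    refine iSup_le fun j => iSup_le fun hj => ?_
    rw [Finset.mem_range] at hj
    refine le_trans (le_iSup (fun l => M k l ⊓ mmPow M j l i) l) ?_
    exact le_iSup_of_le (j+1) (le_iSup_of_le (Finset.mem_Icc.mpr ⟨by omega, by omega⟩) le_rfl)
  · refine iSup_le fun j => iSup_le fun hj => ?_
    rw [Finset.mem_Icc] at hj
    obtain ⟨j', rfl⟩ : ∃ j', j = j' + 1 := ⟨j - 1, by omega⟩
    refine iSup_le fun l => ?_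
    refine le_iSup_of_le l (inf_le_inf_left _ ?_)
    exact mmPow_le_mmStar M j' l i

lemma mmPlus_le_mmStar (k i : α) : mmPlus M k i ≤ mmStar M k i :=
  iSup_le fun j => iSup_le fun _ => mmPow_le_mmStar M j k i

lemma mmPlus_inf_mmStar (k i : α) :
    mmPlus M i i ⊓ mmStar M k i ≤ mmPlus M k i := by
  simp only [mmStar, inf_iSup_eq]
  refine iSup_le fun j => iSup_le fun hj => ?_
  rw [Finset.mem_range] at hj
  match j with
  | 0 =>
    by_cases h : k = i
    · subst h
      exact inf_le_left
    · refine le_trans inf_le_right ?_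
      rw [show mmPow M 0 k i = mmId α k i from rfl, mmId, if_neg h]
      exact B_zero_le _
  | j+1 =>
    refine le_trans inf_le_right ?_
    exact le_iSup_of_le (j+1) (le_iSup_of_le (Finset.mem_Icc.mpr ⟨by omega, by omega⟩) le_rfl)

lemma mmMul_starLam : mmMul M (mmStarLam M lam) = mmStarLam M lam := by
  funext k i
  show (⨆ l, M k l ⊓ (lam ⊓ mmPlus M i i ⊓ mmStar M l i)) = lam ⊓ mmPlus M i i ⊓ mmStar M k i
  have h1 : ∀ l, M k l ⊓ (lam ⊓ mmPlus M i i ⊓ mmStar M l i)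
      = (lam ⊓ mmPlus M i i) ⊓ (M k l ⊓ mmStar M l i) := fun l => by
    ac_rfl
  rw [iSup_congr h1, ← inf_iSup_eq]
  have h2 : (⨆ l, M k l ⊓ mmStar M l i) = mmPlus M k i := mmMul_mmStar_eq_mmPlus M k i
  rw [h2]
  apply le_antisymm
  · exact le_inf inf_le_left (le_trans inf_le_right (mmPlus_le_mmStar M k i))
  · refine le_inf inf_le_left ?_
    refine le_trans (inf_le_inf_right _ inf_le_right) (mmPlus_inf_mmStar M k i)

lemma starLam_fix (z : α → B) :
    mmVec M (mmVec (mmStarLam M lam) z) = mmVec (mmStarLam M lam) z := by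
  rw [← mmVec_mmMul, mmMul_starLam]

lemma fixed_eq_starLam {v : α → B} (hv : mmVec M v = v) (hvl : ∀ i, v i ≤ lam) :
    mmVec (mmStarLam M lam) v = v := by
  funext k
  have hne : Nonempty α := ⟨k⟩
  set m := Fintype.card α with hm
  have hm0 : 0 < m := Fintype.card_pos
  apply le_antisymm
  · refine iSup_le fun i => ?_
    refine le_trans (inf_le_inf_right _ inf_le_right) ?_
    refine le_trans (le_iSup (fun i => mmStar M k i ⊓ v i) i) ?_
    exact le_of_eq (congrFun (mmVec_star_fix hv) k)
  · rw [show v k = mmVec (mmPow M m) v k from (congrFun (mmVec_pow_fix hv m) k).symm]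
    refine iSup_le fun l => ?_
    rw [mmPow_eq, iSup_inf_eq]
    refine iSup_le fun p => ?_
    rw [iSup_inf_eq]
    refine iSup_le fun hp => ?_
    -- pigeonhole
    obtain ⟨u, w, huw, hpe⟩ := Fintype.exists_ne_map_eq_of_card_lt
      (fun u : Fin (m + 1) => p u) (by simp [hm])
    obtain ⟨s, t, hst, htm, hpst⟩ : ∃ s t : ℕ, s < t ∧ t ≤ m ∧ p s = p t := by
      rcases lt_or_gt_of_ne (fun h => huw (Fin.ext h) : (u:ℕ) ≠ (w:ℕ)) with h | h
      · exact ⟨u, w, h, by omega, hpe⟩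
      · exact ⟨w, u, h, by omega, hpe.symm⟩
    refine le_iSup_of_le (p s) ?_
    refine le_inf (le_inf (le_inf ?_ ?_) ?_) ?_
    · -- ≤ lam
      exact le_trans inf_le_right (hvl l)
    · -- ≤ mmPlus M (p s) (p s) : cycle
      refine le_trans inf_le_left ?_
      have h1 : pw M m p ≤ pw M (t - s) (fun u => p (s + u)) := by
        have h2 := pw_shift M s (t - s) p
        rw [show s + (t - s) = t by omega] at h2
        exact le_trans (pw_le (by omega : t ≤ m) p) h2
      refine le_trans h1 ?_
      refine le_trans ?_ (le_iSup_of_le (t - s)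
        (le_iSup_of_le (Finset.mem_Icc.mpr ⟨by omega, by omega⟩) le_rfl))
      rw [mmPow_eq]
      refine le_iSup_of_le (fun u => p (s + u)) (le_iSup_of_le ⟨rfl, ?_⟩ le_rfl)
      show p (s + (t - s)) = p s
      rw [show s + (t - s) = t by omega, hpst]
    · -- ≤ mmStar M k (p s) : prefix
      refine le_trans inf_le_left ?_
      refine le_trans (pw_le (by omega : s ≤ m) p) ?_
      refine le_trans ?_ (mmPow_le_mmStar M s k (p s))
      rw [mmPow_eq]
      exact le_iSup_of_le p (le_iSup_of_le ⟨hp.1, rfl⟩ le_rfl)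
    · -- ≤ v (p s) : suffix
      rw [show v (p s) = mmVec (mmPow M (m - s)) v (p s) from
        (congrFun (mmVec_pow_fix hv (m - s)) (p s)).symm]
      refine le_trans ?_ (le_iSup (fun l' => mmPow M (m - s) (p s) l' ⊓ v l') l)
      refine inf_le_inf_right _ ?_
      have h1 : pw M m p ≤ pw M (m - s) (fun u => p (s + u)) := by
        have h2 := pw_shift M s (m - s) p
        rw [show s + (m - s) = m by omega] at h2
        exact h2
      refine le_trans h1 ?_
      rw [mmPow_eq]
      refine le_iSup_of_le (fun u => p (s + u)) (le_iSup_of_le ⟨rfl, ?_⟩ le_rfl)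
      show p (s + (m - s)) = l
      rw [show s + (m - s) = m by omega]; exact hp.2

end starlam

/-- For fixed `x_L`, the equation `A_{KK} ⊗ x_K ⊕ A_{KL} ⊗ x_L = x_K`
has a solution `x_K ≤ λ·1_K` iff `(A_{KK})* ⊗ A_{KL} ⊗ x_L ≤ λ·1_K`; in that case the
set of such solutions equals `{(A_{KK})* ⊗ A_{KL} ⊗ x_L ⊕ v : A_{KK} ⊗ v = v, v ≤ λ·1_K}`,
which also equals `{(A_{KK})* ⊗ A_{KL} ⊗ x_L ⊕ (A_{KK})*_λ ⊗ z : z ∈ B^{|K|}}`. -/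
theorem stmt13 {n : ℕ} (A : Matrix (Fin n) (Fin n) B) (lam : B) (K L : Finset (Fin n))
    (hU : K ∪ L = Finset.univ) (hD : Disjoint K L) (xL : ↥L → B) :
    ((∃ xK : ↥K → B,
        (∀ i, mmVec (subM A K K) xK i ⊔ mmVec (subM A K L) xL i = xK i) ∧
        ∀ i, xK i ≤ lam) ↔
      ∀ i, mmVec (mmMul (mmStar (subM A K K)) (subM A K L)) xL i ≤ lam) ∧
    ((∀ i, mmVec (mmMul (mmStar (subM A K K)) (subM A K L)) xL i ≤ lam) →
      ∀ xK : ↥K → B,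
        (((∀ i, mmVec (subM A K K) xK i ⊔ mmVec (subM A K L) xL i = xK i) ∧
            ∀ i, xK i ≤ lam) ↔
          ∃ v : ↥K → B, mmVec (subM A K K) v = v ∧ (∀ i, v i ≤ lam) ∧
            xK = fun i => mmVec (mmMul (mmStar (subM A K K)) (subM A K L)) xL i ⊔ v i) ∧
        (((∀ i, mmVec (subM A K K) xK i ⊔ mmVec (subM A K L) xL i = xK i) ∧
            ∀ i, xK i ≤ lam) ↔
          ∃ z : ↥K → B,
            xK = fun i => mmVec (mmMul (mmStar (subM A K K)) (subM A K L)) xL i ⊔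
              mmVec (mmStarLam (subM A K K) lam) z i)) := by
  classical
  set M := subM A K K with hM
  set P := subM A K L with hP
  set b : ↥K → B := mmVec P xL with hb'
  have hms : mmVec (mmMul (mmStar M) P) xL = mmVec (mmStar M) b :=
    mmVec_mmMul _ _ _
  -- forward decomposition core
  have core : ∀ xK : ↥K → B, (∀ i, mmVec M xK i ⊔ b i = xK i) → (∀ i, xK i ≤ lam) →
      ∃ v : ↥K → B, mmVec M v = v ∧ (∀ i, v i ≤ lam) ∧
        xK = fun i => mmVec (mmStar M) b i ⊔ v i := by
    intro xK hsol hle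
    have hx : ∀ i, mmVec M xK i ≤ xK i := fun i => le_sup_left.trans (hsol i).le
    obtain ⟨v, hvfix, hvle, a, hva⟩ := exists_fix hx
    refine ⟨v, hvfix, fun i => (hvle i).trans (hle i), ?_⟩
    have hup : ∀ k i, xK i ≤ mmVec (mmPow M k) xK i ⊔ mmVec (mmStar M) b i := by
      intro k
      induction k with
      | zero => intro i; rw [mmVec_mmPow_zero]; exact le_sup_left
      | succ k ih =>
        intro i
        rw [← hsol i]
        refine sup_le ?_ (le_trans (b_le_xstar b i) le_sup_right)
        refine le_trans (mmVec_mono ih i) ?_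
        refine le_trans (mmVec_sup_le _ _ i) ?_
        rw [mmVec_mmPow_succ]
        exact sup_le_sup le_rfl (Mxstar_le_xstar b i)
    funext i
    refine le_antisymm ?_ (sup_le (xstar_le_sol hsol i) (hvle i))
    rw [hva]
    exact le_trans (hup a i) (sup_comm _ _).le
  -- reverse core
  have corerev : (∀ i, mmVec (mmStar M) b i ≤ lam) → ∀ (v : ↥K → B), mmVec M v = v →
      (∀ i, v i ≤ lam) →
      (∀ i, mmVec M (fun i => mmVec (mmStar M) b i ⊔ v i) i ⊔ b i
        = mmVec (mmStar M) b i ⊔ v i) ∧ (∀ i, mmVec (mmStar M) b i ⊔ v i ≤ lam) := by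
    intro hbl v hvfix hvlam
    constructor
    · intro i
      apply le_antisymm
      · refine sup_le ?_ (le_trans (b_le_xstar b i) le_sup_left)
        refine le_trans (mmVec_sup_le _ _ i) ?_
        exact sup_le_sup (Mxstar_le_xstar b i) (le_of_eq (congrFun hvfix i))
      · refine sup_le ?_ ?_
        · rw [← xstar_sol b i]
          exact sup_le (le_trans (mmVec_mono (fun j => le_sup_left) i) le_sup_left)
            le_sup_right
        · refine le_trans (le_of_eq (congrFun hvfix i).symm) ?_
          exact le_trans (mmVec_mono (fun j => le_sup_right) i) le_sup_left
    · exact fun i => sup_le (hbl i) (hvlam i)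
  refine ⟨⟨?_, ?_⟩, ?_⟩
  · rintro ⟨xK, hsol, hle⟩
    rw [hms]
    exact fun i => (xstar_le_sol hsol i).trans (hle i)
  · intro h
    rw [hms] at h
    exact ⟨mmVec (mmStar M) b, fun i => xstar_sol b i, h⟩
  · intro hb0 xK
    rw [hms] at hb0
    have h2a : ((∀ i, mmVec M xK i ⊔ b i = xK i) ∧ ∀ i, xK i ≤ lam) ↔
        ∃ v : ↥K → B, mmVec M v = v ∧ (∀ i, v i ≤ lam) ∧
          xK = fun i => mmVec (mmStar M) b i ⊔ v i := by
      constructor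
      · rintro ⟨hsol, hle⟩; exact core xK hsol hle
      · rintro ⟨v, hvfix, hvlam, rfl⟩
        exact corerev hb0 v hvfix hvlam
    constructor
    · rw [hms]
      exact h2a
    · rw [hms]
      rw [h2a]
      constructor
      · rintro ⟨v, hvfix, hvlam, hxeq⟩
        refine ⟨v, ?_⟩
        rw [fixed_eq_starLam M lam hvfix hvlam]
        exact hxeq
      · rintro ⟨z, rfl⟩
        exact ⟨mmVec (mmStarLam M lam) z, starLam_fix M lam z,
          fun i => mmVec_starLam_le_lam M lam z i, rfl⟩
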